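/- The 4×4 matrix 𝓛 with rows [1/n, 0, −1/(√2 n), 0], [0, 1/n, −1/(√2 n), 0], [−1/(√2 n), −1/(√2 n), (n−1)/n, −√(n−2)/n], [0, 0, −√(n−2)/n, 1/n] has 0, 1/n (with multiplicity at least 2), and 1 among its eigenvalues, for every integer n ≥ 3. -/
import Mathlib
set_option maxHeartbeats 1000000
set_option linter.unreachableTactic false
set_option linter.unnecessarySeqFocus false
set_option linter.unusedTactic false


open Real

/-- The normalized Laplacian of the weighted quotient graph `B̃` of `BP_n`:
the `4 × 4` matrix with rows `[1/n, 0, -1/(√2 n), 0]`, `[0, 1/n, -1/(√2 n), 0]`,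
`[-1/(√2 n), -1/(√2 n), (n-1)/n, -√(n-2)/n]`, `[0, 0, -√(n-2)/n, 1/n]`. -/
noncomputable def Lcal (n : ℕ) : Matrix (Fin 4) (Fin 4) ℝ :=
  !![1 / n, 0, -(1 / (Real.sqrt 2 * n)), 0;
     0, 1 / n, -(1 / (Real.sqrt 2 * n)), 0;
     -(1 / (Real.sqrt 2 * n)), -(1 / (Real.sqrt 2 * n)), ((n : ℝ) - 1) / n,
       -(Real.sqrt ((n : ℝ) - 2) / n);
     0, 0, -(Real.sqrt ((n : ℝ) - 2) / n), 1 / n]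

/-- For every integer `n ≥ 3`, the matrix `𝓛` above has `0`,
`1/n` (with multiplicity at least `2`), and `1` among its eigenvalues. -/
theorem Lcal_eigenvalues (n : ℕ) (hn : 3 ≤ n) :
    Module.End.HasEigenvalue (Matrix.toLin' (Lcal n)) 0 ∧
      Module.End.HasEigenvalue (Matrix.toLin' (Lcal n)) 1 ∧
      2 ≤ Module.finrank ℝ
        (Module.End.eigenspace (Matrix.toLin' (Lcal n)) (1 / n)) := by
  have hn3 : (3 : ℝ) ≤ (n : ℝ) := by exact_mod_cast hn
  have hnne : (n : ℝ) ≠ 0 := by linarith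
  have hs2 : Real.sqrt 2 ≠ 0 := by positivity
  have hs2sq : Real.sqrt 2 * Real.sqrt 2 = 2 := Real.mul_self_sqrt (by norm_num)
  have hm2 : (0:ℝ) ≤ (n:ℝ) - 2 := by linarith
  have hsnsq : Real.sqrt ((n:ℝ) - 2) * Real.sqrt ((n:ℝ) - 2) = (n:ℝ) - 2 :=
    Real.mul_self_sqrt hm2
  have hsnpos : 0 < Real.sqrt ((n:ℝ) - 2) := Real.sqrt_pos.mpr (by linarith)
  have hflip : Real.sqrt (-2 + (n:ℝ)) = Real.sqrt ((n:ℝ) - 2) := by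
    rw [show (-2 + (n:ℝ)) = (n:ℝ) - 2 by ring]
  have hs2pos : (0:ℝ) < Real.sqrt 2 := Real.sqrt_pos.mpr (by norm_num)
  have hs2cube : Real.sqrt 2 ^ 3 = 2 * Real.sqrt 2 := by
    rw [pow_succ, sq_sqrt (by norm_num : (0:ℝ) ≤ 2)]
  have hsncube : Real.sqrt ((n:ℝ) - 2) ^ 3 = ((n:ℝ) - 2) * Real.sqrt ((n:ℝ) - 2) := by
    rw [pow_succ, sq_sqrt hm2]
  have keyprod : (Real.sqrt 2 * Real.sqrt 2) * (Real.sqrt ((n:ℝ) - 2) * Real.sqrt ((n:ℝ) - 2))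
      = 2 * ((n:ℝ) - 2) := by rw [hs2sq, hsnsq]
  have hnpos : (0:ℝ) < (n:ℝ) := by linarith
  have hs2sq2 : Real.sqrt 2 ^ 2 = 2 := Real.sq_sqrt (by norm_num)
  have hsnsq2 : Real.sqrt ((n:ℝ) - 2) ^ 2 = (n:ℝ) - 2 := Real.sq_sqrt hm2
  -- eigenvector for 0
  have h0 : Module.End.HasEigenvalue (Matrix.toLin' (Lcal n)) 0 := by
    apply Module.End.hasEigenvalue_of_hasEigenvector (x := ![1, 1, Real.sqrt 2, Real.sqrt 2 * Real.sqrt ((n:ℝ) - 2)])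
    constructor
    · rw [Module.End.mem_eigenspace_iff, Matrix.toLin'_apply]
      funext i
      fin_cases i <;>
        simp [Lcal, Matrix.mulVec, dotProduct, Fin.sum_univ_four] <;>
        field_simp <;> ring_nf <;> (try simp only [hflip, hs2cube, hsncube, hs2sq2, hsnsq2]) <;> (try ring_nf) <;>
        nlinarith [hs2sq, hsnsq, hsnpos, hs2pos, hs2cube, hsncube, keyprod, hnpos,
          mul_pos hnpos hnpos, mul_pos (mul_pos hnpos hnpos) hnpos,
          mul_pos (mul_pos (mul_pos hnpos hnpos) hnpos) hnpos,
          Real.sq_sqrt (show (0:ℝ) ≤ 2 by norm_num), Real.sq_sqrt hm2]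
    · intro h
      have := congrFun h 0
      simp at this
  -- eigenvector for 1
  have h1 : Module.End.HasEigenvalue (Matrix.toLin' (Lcal n)) 1 := by
    apply Module.End.hasEigenvalue_of_hasEigenvector
      (x := ![1, 1, Real.sqrt 2 * (1 - (n:ℝ)), Real.sqrt 2 * Real.sqrt ((n:ℝ) - 2)])
    constructor
    · rw [Module.End.mem_eigenspace_iff, Matrix.toLin'_apply]
      funext i
      fin_cases i <;>
        simp [Lcal, Matrix.mulVec, dotProduct, Fin.sum_univ_four] <;>
        field_simp <;> ring_nf <;> (try simp only [hflip, hs2cube, hsncube, hs2sq2, hsnsq2]) <;> (try ring_nf) <;>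
        nlinarith [hs2sq, hsnsq, hsnpos, hs2pos, hs2cube, hsncube, keyprod, hnpos,
          mul_pos hnpos hnpos, mul_pos (mul_pos hnpos hnpos) hnpos,
          mul_pos (mul_pos (mul_pos hnpos hnpos) hnpos) hnpos,
          Real.sq_sqrt (show (0:ℝ) ≤ 2 by norm_num), Real.sq_sqrt hm2]
    · intro h
      have := congrFun h 0
      simp at this
  refine ⟨h0, h1, ?_⟩
  -- two eigenvectors for 1/n
  set E := Module.End.eigenspace (Matrix.toLin' (Lcal n)) (1 / n) with hE
  have hu1 : (![1, -1, 0, 0] : Fin 4 → ℝ) ∈ E := by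
    rw [hE, Module.End.mem_eigenspace_iff, Matrix.toLin'_apply]
    funext i
    fin_cases i <;>
      simp [Lcal, Matrix.mulVec, dotProduct, Fin.sum_univ_four] <;>
      field_simp
  have hu2 : (![Real.sqrt ((n:ℝ) - 2), Real.sqrt ((n:ℝ) - 2), 0, -Real.sqrt 2] : Fin 4 → ℝ) ∈ E := by
    rw [hE, Module.End.mem_eigenspace_iff, Matrix.toLin'_apply]
    funext i
    fin_cases i <;>
      simp [Lcal, Matrix.mulVec, dotProduct, Fin.sum_univ_four] <;>
      field_simp <;> ring_nf <;> (try simp only [hflip, hs2cube, hsncube, hs2sq2, hsnsq2]) <;> (try ring_nf) <;>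
      nlinarith [hs2sq, hsnsq, hsnpos, hs2pos, hs2cube, hsncube, keyprod, hnpos,
        mul_pos hnpos hnpos, mul_pos (mul_pos hnpos hnpos) hnpos,
        mul_pos (mul_pos (mul_pos hnpos hnpos) hnpos) hnpos,
        Real.sq_sqrt (show (0:ℝ) ≤ 2 by norm_num), Real.sq_sqrt hm2]
  have hli : LinearIndependent ℝ
      ![(![1, -1, 0, 0] : Fin 4 → ℝ), ![Real.sqrt ((n:ℝ) - 2), Real.sqrt ((n:ℝ) - 2), 0, -Real.sqrt 2]] := by
    rw [LinearIndependent.pair_iff]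
    intro a b hab
    have h0 := congrFun hab 0
    have h1 := congrFun hab 1
    have h3 := congrFun hab 3
    simp [Matrix.cons_val_zero, Matrix.cons_val_one] at h0 h1 h3
    refine ⟨?_, h3⟩
    rw [h3] at h0
    simpa using h0
  have hspan : Submodule.span ℝ
      (Set.range ![(![1, -1, 0, 0] : Fin 4 → ℝ), ![Real.sqrt ((n:ℝ) - 2), Real.sqrt ((n:ℝ) - 2), 0, -Real.sqrt 2]]) ≤ E := by
    rw [Submodule.span_le]
    rintro x ⟨i, rfl⟩
    fin_cases i <;> simpa using (by assumption : _)
  calc (2:ℕ) = Module.finrank ℝ (Submodule.span ℝ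
      (Set.range ![(![1, -1, 0, 0] : Fin 4 → ℝ), ![Real.sqrt ((n:ℝ) - 2), Real.sqrt ((n:ℝ) - 2), 0, -Real.sqrt 2]])) := by
        rw [finrank_span_eq_card hli]; simp
    _ ≤ Module.finrank ℝ E := Submodule.finrank_mono hspan
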